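/- arXiv:1511.05046 — 3 statements merged into one kernel-verified Lean document; each statement's English description precedes it below -/
import Mathlib

section
/- The operator Φ defined by (Φu)(l) = 2 ∫₀^{l_m} r(l,ĺ) ∫₀^{a_m} β(a,ĺ) u(a,ĺ) da dĺ, mapping L^1((0,a_m)×(0,l_m)) to L^1(0,l_m), is a compact operator, provided r satisfies the uniform equicontinuity condition sup_{l,ĺ} |r(l+t,ĺ) − r(l,ĺ)| ≤ k·δ(t) with δ(t) → 0 as t → 0. -/
open MeasureTheory Set Filter Topology BoundedContinuousFunction

namespace Stmt2Aux

/-- inner integral -/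
noncomputable def gF (a_m : ℝ) (β : ℝ → ℝ → ℝ) (u : ℝ × ℝ → ℝ) (l' : ℝ) : ℝ :=
  ∫ a in Ioo (0:ℝ) a_m, β a l' * u (a, l')

/-- slice L¹ norm -/
noncomputable def GF (a_m : ℝ) (u : ℝ × ℝ → ℝ) (l' : ℝ) : ℝ :=
  ∫ a in Ioo (0:ℝ) a_m, ‖u (a, l')‖

/-- the output function of the operator -/
noncomputable def FF (a_m l_m : ℝ) (β r : ℝ → ℝ → ℝ) (u : ℝ × ℝ → ℝ) (l : ℝ) : ℝ :=
  2 * ∫ l' in Ioo (0:ℝ) l_m, r l l' * gF a_m β u l'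

variable {a_m l_m Cβ Cr k : ℝ} {β r : ℝ → ℝ → ℝ} {δ : ℝ → ℝ} {u : ℝ × ℝ → ℝ}

lemma gF_sm (hβmeas : Measurable fun q : ℝ × ℝ => β q.1 q.2)
    (hu : StronglyMeasurable u) : StronglyMeasurable (gF a_m β u) := by
  have h : StronglyMeasurable (Function.uncurry fun l' a => β a l' * u (a, l')) := by
    show StronglyMeasurable fun p : ℝ × ℝ => β p.2 p.1 * u (p.2, p.1)
    exact ((hβmeas.comp measurable_swap).stronglyMeasurable).mul
      (hu.comp_measurable measurable_swap)
  exact h.integral_prod_right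

lemma gF_ae_bound (hβ0 : ∀ a l, 0 ≤ β a l) (hβb : ∀ a l, β a l ≤ Cβ)
    (hβmeas : Measurable fun q : ℝ × ℝ => β q.1 q.2)
    (hui : Integrable u (((volume : Measure ℝ).restrict (Ioo 0 a_m)).prod
      ((volume : Measure ℝ).restrict (Ioo 0 l_m)))) :
    ∀ᵐ l' ∂((volume : Measure ℝ).restrict (Ioo (0:ℝ) l_m)),
      ‖gF a_m β u l'‖ ≤ Cβ * GF a_m u l' := by
  filter_upwards [hui.swap.prod_right_ae] with l' hs
  have hs' : Integrable (fun a => u (a, l')) ((volume : Measure ℝ).restrict (Ioo 0 a_m)) := hs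
  have hβsm : AEStronglyMeasurable (fun a => β a l')
      ((volume : Measure ℝ).restrict (Ioo 0 a_m)) :=
    ((hβmeas.comp (measurable_id.prodMk measurable_const)).stronglyMeasurable).aestronglyMeasurable
  have h1 : Integrable (fun a => β a l' * u (a, l'))
      ((volume : Measure ℝ).restrict (Ioo 0 a_m)) :=
    hs'.bdd_mul (c := Cβ) hβsm (ae_of_all _ fun a => by
      rw [Real.norm_eq_abs, abs_of_nonneg (hβ0 a l')]; exact hβb a l')
  calc ‖gF a_m β u l'‖ ≤ ∫ a in Ioo (0:ℝ) a_m, ‖β a l' * u (a, l')‖ :=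
        norm_integral_le_integral_norm _
    _ ≤ ∫ a in Ioo (0:ℝ) a_m, Cβ * ‖u (a, l')‖ := by
        refine integral_mono h1.norm (hs'.norm.const_mul Cβ) fun a => ?_
        rw [norm_mul]
        exact mul_le_mul_of_nonneg_right
          (by rw [Real.norm_eq_abs, abs_of_nonneg (hβ0 a l')]; exact hβb a l')
          (norm_nonneg _)
    _ = Cβ * GF a_m u l' := integral_const_mul _ _

lemma rg_int (hr0 : ∀ l l', 0 ≤ r l l') (hrb : ∀ l l', r l l' ≤ Cr)
    (hrmeas : Measurable fun q : ℝ × ℝ => r q.1 q.2)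
    (hβ0 : ∀ a l, 0 ≤ β a l) (hβb : ∀ a l, β a l ≤ Cβ)
    (hβmeas : Measurable fun q : ℝ × ℝ => β q.1 q.2)
    (hu : StronglyMeasurable u)
    (hui : Integrable u (((volume : Measure ℝ).restrict (Ioo 0 a_m)).prod
      ((volume : Measure ℝ).restrict (Ioo 0 l_m))))
    (hCr : 0 ≤ Cr) (l : ℝ) :
    Integrable (fun l' => r l l' * gF a_m β u l')
      ((volume : Measure ℝ).restrict (Ioo (0:ℝ) l_m)) := by
  have hGint : Integrable (GF a_m u) ((volume : Measure ℝ).restrict (Ioo (0:ℝ) l_m)) :=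
    hui.integral_norm_prod_right
  refine Integrable.mono' (hGint.const_mul (Cr * Cβ)) ?_ ?_
  · exact (((hrmeas.comp (measurable_const.prodMk measurable_id)).stronglyMeasurable).mul
      (gF_sm hβmeas hu)).aestronglyMeasurable
  · filter_upwards [gF_ae_bound hβ0 hβb hβmeas hui] with l' h
    rw [norm_mul, mul_assoc]
    exact mul_le_mul
      (by rw [Real.norm_eq_abs, abs_of_nonneg (hr0 l l')]; exact hrb l l')
      h (norm_nonneg _) hCr

lemma FF_bound (hr0 : ∀ l l', 0 ≤ r l l') (hrb : ∀ l l', r l l' ≤ Cr)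
    (hrmeas : Measurable fun q : ℝ × ℝ => r q.1 q.2)
    (hβ0 : ∀ a l, 0 ≤ β a l) (hβb : ∀ a l, β a l ≤ Cβ)
    (hβmeas : Measurable fun q : ℝ × ℝ => β q.1 q.2)
    (hu : StronglyMeasurable u)
    (hui : Integrable u (((volume : Measure ℝ).restrict (Ioo 0 a_m)).prod
      ((volume : Measure ℝ).restrict (Ioo 0 l_m))))
    (hCr : 0 ≤ Cr) (l : ℝ) :
    ‖FF a_m l_m β r u l‖
      ≤ 2 * (Cr * Cβ * ∫ l' in Ioo (0:ℝ) l_m, GF a_m u l') := by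
  have hGint : Integrable (GF a_m u) ((volume : Measure ℝ).restrict (Ioo (0:ℝ) l_m)) :=
    hui.integral_norm_prod_right
  have h1 : ‖∫ l' in Ioo (0:ℝ) l_m, r l l' * gF a_m β u l'‖
      ≤ Cr * Cβ * ∫ l' in Ioo (0:ℝ) l_m, GF a_m u l' := by
    refine (norm_integral_le_integral_norm _).trans ?_
    refine le_trans (integral_mono_ae
      (rg_int hr0 hrb hrmeas hβ0 hβb hβmeas hu hui hCr l).norm
      (hGint.const_mul (Cr * Cβ)) ?_) (le_of_eq (integral_const_mul _ _))
    filter_upwards [gF_ae_bound hβ0 hβb hβmeas hui] with l' h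
    rw [norm_mul, mul_assoc]
    exact mul_le_mul
      (by rw [Real.norm_eq_abs, abs_of_nonneg (hr0 l l')]; exact hrb l l')
      h (norm_nonneg _) hCr
  have h2 : FF a_m l_m β r u l = 2 * ∫ l' in Ioo (0:ℝ) l_m, r l l' * gF a_m β u l' := rfl
  rw [h2, norm_mul]
  have h3 : ‖(2:ℝ)‖ = 2 := by norm_num
  rw [h3]
  exact mul_le_mul_of_nonneg_left h1 (by norm_num)

lemma FF_diff (hr0 : ∀ l l', 0 ≤ r l l') (hrb : ∀ l l', r l l' ≤ Cr)
    (hrmeas : Measurable fun q : ℝ × ℝ => r q.1 q.2)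
    (hβ0 : ∀ a l, 0 ≤ β a l) (hβb : ∀ a l, β a l ≤ Cβ)
    (hβmeas : Measurable fun q : ℝ × ℝ => β q.1 q.2)
    (hu : StronglyMeasurable u)
    (hui : Integrable u (((volume : Measure ℝ).restrict (Ioo 0 a_m)).prod
      ((volume : Measure ℝ).restrict (Ioo 0 l_m))))
    (hCr : 0 ≤ Cr) {ε : ℝ}
    (hreg' : ∀ t : ℝ, |t| < ε → ∀ l l' : ℝ, |r (l + t) l' - r l l'| ≤ k * δ t)
    (l t : ℝ) (ht : |t| < ε) :
    ‖FF a_m l_m β r u (l + t) - FF a_m l_m β r u l‖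
      ≤ 2 * ((k * δ t) * (Cβ * ∫ l' in Ioo (0:ℝ) l_m, GF a_m u l')) := by
  have hGint : Integrable (GF a_m u) ((volume : Measure ℝ).restrict (Ioo (0:ℝ) l_m)) :=
    hui.integral_norm_prod_right
  have hkδ : 0 ≤ k * δ t := (abs_nonneg _).trans (hreg' t ht 0 0)
  have hil := rg_int hr0 hrb hrmeas hβ0 hβb hβmeas hu hui hCr (l + t)
  have hil2 := rg_int hr0 hrb hrmeas hβ0 hβb hβmeas hu hui hCr l
  have hsub : FF a_m l_m β r u (l + t) - FF a_m l_m β r u l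
      = 2 * ∫ l' in Ioo (0:ℝ) l_m,
          (r (l + t) l' * gF a_m β u l' - r l l' * gF a_m β u l') := by
    show (2 * ∫ l' in Ioo (0:ℝ) l_m, r (l + t) l' * gF a_m β u l')
        - 2 * ∫ l' in Ioo (0:ℝ) l_m, r l l' * gF a_m β u l' = _
    rw [integral_sub hil hil2, mul_sub]
  rw [hsub, norm_mul]
  have h3 : ‖(2:ℝ)‖ = 2 := by norm_num
  rw [h3]
  refine mul_le_mul_of_nonneg_left ?_ (by norm_num)
  refine (norm_integral_le_integral_norm _).trans ?_
  refine le_trans (integral_mono_ae (hil.sub hil2).norm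
    (((hGint.const_mul Cβ)).const_mul (k * δ t)) ?_) ?_
  · filter_upwards [gF_ae_bound hβ0 hβb hβmeas hui] with l' h
    rw [← sub_mul, norm_mul]
    exact mul_le_mul
      (by rw [Real.norm_eq_abs]; exact hreg' t ht l l')
      h (norm_nonneg _) hkδ
  · rw [integral_const_mul, integral_const_mul]

lemma mod_tendsto (hδ : Tendsto δ (nhds 0) (nhds 0)) (c : ℝ) :
    Tendsto (fun t => 2 * ((k * δ t) * c)) (𝓝 0) (𝓝 0) := by
  have h2 : (fun t => 2 * ((k * δ t) * c)) = fun t => (2 * k * c) * δ t := by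
    funext t; ring
  rw [h2]
  simpa using hδ.const_mul (2 * k * c)

lemma FF_cont (hr0 : ∀ l l', 0 ≤ r l l') (hrb : ∀ l l', r l l' ≤ Cr)
    (hrmeas : Measurable fun q : ℝ × ℝ => r q.1 q.2)
    (hβ0 : ∀ a l, 0 ≤ β a l) (hβb : ∀ a l, β a l ≤ Cβ)
    (hβmeas : Measurable fun q : ℝ × ℝ => β q.1 q.2)
    (hu : StronglyMeasurable u)
    (hui : Integrable u (((volume : Measure ℝ).restrict (Ioo 0 a_m)).prod
      ((volume : Measure ℝ).restrict (Ioo 0 l_m))))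
    (hCr : 0 ≤ Cr) {ε : ℝ} (hε : 0 < ε)
    (hreg' : ∀ t : ℝ, |t| < ε → ∀ l l' : ℝ, |r (l + t) l' - r l l'| ≤ k * δ t)
    (hδ : Tendsto δ (nhds 0) (nhds 0)) :
    Continuous (FF a_m l_m β r u) := by
  rw [Metric.continuous_iff]
  intro l η hη
  obtain ⟨γ, hγ, hγ'⟩ := Metric.tendsto_nhds_nhds.mp
    (mod_tendsto hδ (Cβ * ∫ l' in Ioo (0:ℝ) l_m, GF a_m u l')) η hη
  refine ⟨min γ ε, lt_min hγ hε, fun a ha => ?_⟩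
  rw [Real.dist_eq] at ha ⊢
  have hta : |a - l| < γ := ha.trans_le (min_le_left _ _)
  have hta2 : |a - l| < ε := ha.trans_le (min_le_right _ _)
  have hd := FF_diff hr0 hrb hrmeas hβ0 hβb hβmeas hu hui hCr hreg' l (a - l) hta2
  rw [show l + (a - l) = a from by ring] at hd
  rw [Real.norm_eq_abs] at hd
  have hsmall := hγ' (x := a - l) (by rwa [Real.dist_eq, sub_zero])
  rw [Real.dist_eq, sub_zero] at hsmall
  exact lt_of_le_of_lt (hd.trans (le_abs_self _)) hsmall

/-- membership of the extension in L¹ -/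
lemma Psi_mem (l_m : ℝ) (hlm : 0 < l_m) (h : Icc (0:ℝ) l_m →ᵇ ℝ) :
    MemLp (fun x => h (projIcc 0 l_m hlm.le x)) 1
      ((volume : Measure ℝ).restrict (Ioo (0:ℝ) l_m)) :=
  MemLp.of_bound ((h.continuous.comp continuous_projIcc).aestronglyMeasurable) ‖h‖
    (ae_of_all _ fun _ => h.norm_coe_le_norm _)

/-- The map from continuous functions on `[0, l_m]` to `L¹(0, l_m)`. -/
noncomputable def Psi (l_m : ℝ) (hlm : 0 < l_m) (h : Icc (0:ℝ) l_m →ᵇ ℝ) :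
    Lp ℝ 1 ((volume : Measure ℝ).restrict (Ioo (0:ℝ) l_m)) :=
  MemLp.toLp _ (Psi_mem l_m hlm h)

lemma Psi_cont (l_m : ℝ) (hlm : 0 < l_m) : Continuous (Psi l_m hlm) := by
  refine LipschitzWith.continuous
    (K := measureUnivNNReal ((volume : Measure ℝ).restrict (Ioo (0:ℝ) l_m)))
    (LipschitzWith.of_dist_le_mul fun f g => ?_)
  rw [dist_eq_norm]
  refine le_trans (Lp.norm_le_of_ae_bound (C := dist f g) dist_nonneg ?_)
    (le_of_eq (by rw [ENNReal.toReal_one, inv_one, Real.rpow_one]))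
  have h2 : ⇑(Psi l_m hlm f)
      =ᵐ[(volume : Measure ℝ).restrict (Ioo (0:ℝ) l_m)]
      fun x => f (projIcc 0 l_m hlm.le x) := MemLp.coeFn_toLp _
  have h3 : ⇑(Psi l_m hlm g)
      =ᵐ[(volume : Measure ℝ).restrict (Ioo (0:ℝ) l_m)]
      fun x => g (projIcc 0 l_m hlm.le x) := MemLp.coeFn_toLp _
  filter_upwards [Lp.coeFn_sub (Psi l_m hlm f) (Psi l_m hlm g), h2, h3] with x h1 h2x h3x
  rw [h1, Pi.sub_apply, h2x, h3x]
  exact le_trans (le_of_eq (dist_eq_norm _ _).symm)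
    (BoundedContinuousFunction.dist_coe_le_dist _)

/-- The equicontinuous, uniformly bounded family. -/
def ASet (l_m Cβ k ε M : ℝ) (δ : ℝ → ℝ) : Set (Icc (0:ℝ) l_m →ᵇ ℝ) :=
  {h | (∀ x, ‖h x‖ ≤ M) ∧ ∀ x y : Icc (0:ℝ) l_m, |(x:ℝ) - (y:ℝ)| < ε →
    ‖h x - h y‖ ≤ 2 * ((k * δ ((x:ℝ) - (y:ℝ))) * Cβ)}

lemma ASet_equicontinuous {ε M : ℝ} (hε : 0 < ε)
    (hδ : Tendsto δ (nhds 0) (nhds 0))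
    (hkδ : ∀ t : ℝ, |t| < ε → 0 ≤ k * δ t) :
    Equicontinuous fun f : ↥(ASet l_m Cβ k ε M δ) => ⇑(f : Icc (0:ℝ) l_m →ᵇ ℝ) := by
  intro x₀
  rw [Metric.equicontinuousAt_iff]
  intro η hη
  obtain ⟨γ, hγ, hγ'⟩ := Metric.tendsto_nhds_nhds.mp (mod_tendsto hδ Cβ) η hη
  refine ⟨min γ ε, lt_min hγ hε, fun x hx f => ?_⟩
  rw [Subtype.dist_eq, Real.dist_eq] at hx
  have h1 : |(x₀:ℝ) - (x:ℝ)| < min γ ε := by rwa [abs_sub_comm] at hx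
  have h2 := f.2.2 x₀ x (h1.trans_le (min_le_right _ _))
  rw [Real.norm_eq_abs] at h2
  rw [Real.dist_eq]
  have hsmall := hγ' (x := (x₀:ℝ) - (x:ℝ))
    (by rw [Real.dist_eq, sub_zero]; exact h1.trans_le (min_le_left _ _))
  rw [Real.dist_eq, sub_zero] at hsmall
  exact lt_of_le_of_lt (h2.trans (le_abs_self _)) hsmall

end Stmt2Aux

open Stmt2Aux

/-- The boundary operator Φ : L¹((0,a_m)×(0,l_m)) → L¹(0,l_m) is compact,
provided r satisfies the uniform equicontinuity condition. -/
theorem stmt_2 (a_m l_m Cβ Cr k : ℝ) (ham : 0 < a_m) (hlm : 0 < l_m)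
    (β r : ℝ → ℝ → ℝ) (δ : ℝ → ℝ)
    (hβ0 : ∀ a l, 0 ≤ β a l) (hβb : ∀ a l, β a l ≤ Cβ)
    (hr0 : ∀ l l', 0 ≤ r l l') (hrb : ∀ l l', r l l' ≤ Cr)
    (hrmeas : Measurable fun q : ℝ × ℝ => r q.1 q.2)
    (hβmeas : Measurable fun q : ℝ × ℝ => β q.1 q.2)
    (hδ : Tendsto δ (nhds 0) (nhds 0))
    (hreg : ∃ ε > (0:ℝ), ∀ t : ℝ, |t| < ε → ∀ l l' : ℝ,
      |r (l + t) l' - r l l'| ≤ k * δ t)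
    (T : Lp ℝ 1 (volume.restrict (Ioo (0:ℝ) a_m ×ˢ Ioo (0:ℝ) l_m)) →L[ℝ]
         Lp ℝ 1 (volume.restrict (Ioo (0:ℝ) l_m)))
    (hT : ∀ u, (T u : ℝ → ℝ) =ᵐ[volume.restrict (Ioo (0:ℝ) l_m)]
      fun l => 2 * ∫ l' in (0:ℝ)..l_m, r l l' *
        ∫ a in (0:ℝ)..a_m, β a l' * (u : ℝ × ℝ → ℝ) (a, l')) :
    IsCompactOperator T := by
  obtain ⟨ε, hε, hreg'⟩ := hreg
  have hCβ : 0 ≤ Cβ := (hβ0 0 0).trans (hβb 0 0)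
  have hCr : 0 ≤ Cr := (hr0 0 0).trans (hrb 0 0)
  have hkδ : ∀ t : ℝ, |t| < ε → 0 ≤ k * δ t :=
    fun t ht => (abs_nonneg _).trans (hreg' t ht 0 0)
  have hprod : (volume : Measure (ℝ × ℝ)).restrict (Ioo (0:ℝ) a_m ×ˢ Ioo (0:ℝ) l_m)
      = ((volume : Measure ℝ).restrict (Ioo 0 a_m)).prod
        ((volume : Measure ℝ).restrict (Ioo 0 l_m)) := by
    rw [Measure.prod_restrict, ← Measure.volume_eq_prod]
  -- main compactness data
  set M : ℝ := 2 * (Cr * Cβ) with hM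
  have hAA : IsCompact (closure (ASet l_m Cβ k ε M δ)) := by
    refine BoundedContinuousFunction.arzela_ascoli (Icc (-M) M) isCompact_Icc _ ?_
      (ASet_equicontinuous hε hδ hkδ)
    intro f x hf
    have := hf.1 x
    rw [Real.norm_eq_abs] at this
    exact abs_le.mp this
  rw [isCompactOperator_iff_exists_mem_nhds_image_subset_compact]
  refine ⟨Metric.closedBall 0 1, Metric.closedBall_mem_nhds 0 one_pos,
    Psi l_m hlm '' closure (ASet l_m Cβ k ε M δ), hAA.image (Psi_cont l_m hlm), ?_⟩
  rintro - ⟨u, huball, rfl⟩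
  have hu1 : ‖u‖ ≤ 1 := mem_closedBall_zero_iff.mp huball
  have husm : StronglyMeasurable ((u : ℝ × ℝ → ℝ)) := Lp.stronglyMeasurable u
  have hui : Integrable ((u : ℝ × ℝ → ℝ))
      (((volume : Measure ℝ).restrict (Ioo 0 a_m)).prod
        ((volume : Measure ℝ).restrict (Ioo 0 l_m))) := by
    rw [← hprod]; exact L1.integrable_coeFn u
  -- the integral of GF equals the L¹ norm of u
  have hIu : (∫ l' in Ioo (0:ℝ) l_m, GF a_m (u : ℝ × ℝ → ℝ) l') = ‖u‖ := by
    have hv := congrArg (fun m : Measure (ℝ × ℝ) => ∫ z, ‖(u : ℝ × ℝ → ℝ) z‖ ∂m) hprod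
    have h1 : (∫ l' in Ioo (0:ℝ) l_m, GF a_m (u : ℝ × ℝ → ℝ) l')
        = ∫ z, ‖(u : ℝ × ℝ → ℝ) z‖
            ∂(((volume : Measure ℝ).restrict (Ioo 0 a_m)).prod
              ((volume : Measure ℝ).restrict (Ioo 0 l_m))) := by
      rw [integral_prod _ hui.norm]
      exact (integral_integral_swap
        (f := fun a l' => ‖(u : ℝ × ℝ → ℝ) (a, l')‖) hui.norm).symm
    rw [h1, L1.norm_eq_integral_norm]
    exact hv.symm
  have hIunn : (∫ l' in Ioo (0:ℝ) l_m, GF a_m (u : ℝ × ℝ → ℝ) l') ≤ 1 := by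
    rw [hIu]; exact hu1
  -- the bound on FF
  have hMb : ∀ x : Icc (0:ℝ) l_m, ‖FF a_m l_m β r (u : ℝ × ℝ → ℝ) (x:ℝ)‖ ≤ M := by
    intro x
    refine (FF_bound hr0 hrb hrmeas hβ0 hβb hβmeas husm hui hCr _).trans ?_
    rw [hM]
    have : Cr * Cβ * ∫ l' in Ioo (0:ℝ) l_m, GF a_m (u : ℝ × ℝ → ℝ) l' ≤ Cr * Cβ := by
      have hnn : 0 ≤ (∫ l' in Ioo (0:ℝ) l_m, GF a_m (u : ℝ × ℝ → ℝ) l') :=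
        integral_nonneg fun l' => integral_nonneg fun a => norm_nonneg _
      exact mul_le_of_le_one_right (mul_nonneg hCr hCβ) hIunn
    linarith
  have hFc : Continuous (FF a_m l_m β r (u : ℝ × ℝ → ℝ)) :=
    FF_cont hr0 hrb hrmeas hβ0 hβb hβmeas husm hui hCr hε hreg' hδ
  -- representation of T u via FF
  have hFFrep : ∀ x : ℝ, (2 * ∫ l' in (0:ℝ)..l_m, r x l' *
      ∫ a in (0:ℝ)..a_m, β a l' * (u : ℝ × ℝ → ℝ) (a, l'))
      = FF a_m l_m β r (u : ℝ × ℝ → ℝ) x := by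
    intro x
    have hg : ∀ l' : ℝ, (∫ a in (0:ℝ)..a_m, β a l' * (u : ℝ × ℝ → ℝ) (a, l'))
        = gF a_m β (u : ℝ × ℝ → ℝ) l' := by
      intro l'
      rw [intervalIntegral.integral_of_le ham.le]
      exact (setIntegral_congr_set Ioo_ae_eq_Ioc).symm
    simp only [hg]
    rw [intervalIntegral.integral_of_le hlm.le]
    exact congrArg (fun z => 2 * z) (setIntegral_congr_set Ioo_ae_eq_Ioc).symm
  -- package FF u as a bounded continuous function on Icc
  refine ⟨BoundedContinuousFunction.ofNormedAddCommGroup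
    (fun x : Icc (0:ℝ) l_m => FF a_m l_m β r (u : ℝ × ℝ → ℝ) (x:ℝ))
    (hFc.comp continuous_subtype_val) M hMb, subset_closure ?_, ?_⟩
  · -- membership in ASet
    refine ⟨fun x => by simpa using hMb x, fun x y hxy => ?_⟩
    simp only [BoundedContinuousFunction.coe_ofNormedAddCommGroup]
    have hd := FF_diff hr0 hrb hrmeas hβ0 hβb hβmeas husm hui hCr hreg'
      (y:ℝ) ((x:ℝ) - (y:ℝ)) hxy
    rw [show (y:ℝ) + ((x:ℝ) - (y:ℝ)) = (x:ℝ) from by ring] at hd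
    refine hd.trans ?_
    have h2 : (k * δ ((x:ℝ) - (y:ℝ)))
        * (Cβ * ∫ l' in Ioo (0:ℝ) l_m, GF a_m (u : ℝ × ℝ → ℝ) l')
        ≤ (k * δ ((x:ℝ) - (y:ℝ))) * Cβ := by
      refine mul_le_mul_of_nonneg_left ?_ (hkδ _ hxy)
      exact mul_le_of_le_one_right hCβ hIunn
    linarith
  · -- Psi of it equals T u
    symm
    apply Lp.ext
    have h2 : ⇑(Psi l_m hlm (BoundedContinuousFunction.ofNormedAddCommGroup
        (fun x : Icc (0:ℝ) l_m => FF a_m l_m β r (u : ℝ × ℝ → ℝ) (x:ℝ))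
        (hFc.comp continuous_subtype_val) M hMb))
        =ᵐ[(volume : Measure ℝ).restrict (Ioo (0:ℝ) l_m)]
        fun x => (BoundedContinuousFunction.ofNormedAddCommGroup
          (fun x : Icc (0:ℝ) l_m => FF a_m l_m β r (u : ℝ × ℝ → ℝ) (x:ℝ))
          (hFc.comp continuous_subtype_val) M hMb) (projIcc 0 l_m hlm.le x) :=
      MemLp.coeFn_toLp _
    filter_upwards [hT u, h2, ae_restrict_mem measurableSet_Ioo] with x hx1 hx2 hx3
    rw [hx1, hx2, projIcc_of_mem hlm.le (mem_Icc_of_Ioo hx3)]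
    simp only [BoundedContinuousFunction.coe_ofNormedAddCommGroup]
    exact hFFrep x
end

section
/- If nonnegative differentiable functions P₀, P₁, P₂ satisfy P₀' ≤ −σP₀, P₁' ≤ ωP₀ − σP₁, P₂' ≤ ω(P₀+P₁) − σP₂ with σ, ω > 0, then P₂(t) ≤ e^{−σt}( P₂(0) + ω t (P₀(0)+P₁(0)) + (ω² t²/2) P₀(0) ) for all t ≥ 0. -/
open MeasureTheory Set Filter Topology

lemma aux_le_init (h h' : ℝ → ℝ)
    (hd : ∀ t, 0 ≤ t → HasDerivAt h (h' t) t)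
    (hle : ∀ t, 0 ≤ t → h' t ≤ 0) :
    ∀ t, 0 ≤ t → h t ≤ h 0 := by
  have hanti : AntitoneOn h (Set.Ici (0:ℝ)) := by
    apply antitoneOn_of_deriv_nonpos (convex_Ici 0)
    · intro x hx
      exact (hd x hx).continuousAt.continuousWithinAt
    · intro x hx
      rw [interior_Ici] at hx
      exact (hd x (le_of_lt hx)).differentiableAt.differentiableWithinAt
    · intro x hx
      rw [interior_Ici] at hx
      rw [(hd x (le_of_lt hx)).deriv]
      exact hle x (le_of_lt hx)
  intro t ht
  exact hanti (by simp) ht ht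

/-- If P₀' ≤ −σP₀, P₁' ≤ ωP₀ − σP₁, P₂' ≤ ω(P₀+P₁) − σP₂, then
P₂(t) ≤ e^{−σt}(P₂(0) + ωt(P₀(0)+P₁(0)) + ω²t²/2 · P₀(0)). -/
theorem stmt_11 (σ ω : ℝ) (hσ : 0 < σ) (hω : 0 < ω)
    (P₀ P₁ P₂ d₀ d₁ d₂ : ℝ → ℝ)
    (hP₀nn : ∀ t, 0 ≤ t → 0 ≤ P₀ t)
    (hP₁nn : ∀ t, 0 ≤ t → 0 ≤ P₁ t)
    (hP₂nn : ∀ t, 0 ≤ t → 0 ≤ P₂ t)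
    (hd₀ : ∀ t, 0 ≤ t → HasDerivAt P₀ (d₀ t) t)
    (hd₁ : ∀ t, 0 ≤ t → HasDerivAt P₁ (d₁ t) t)
    (hd₂ : ∀ t, 0 ≤ t → HasDerivAt P₂ (d₂ t) t)
    (h₀ : ∀ t, 0 ≤ t → d₀ t ≤ -σ * P₀ t)
    (h₁ : ∀ t, 0 ≤ t → d₁ t ≤ ω * P₀ t - σ * P₁ t)
    (h₂ : ∀ t, 0 ≤ t → d₂ t ≤ ω * (P₀ t + P₁ t) - σ * P₂ t) :
    ∀ t, 0 ≤ t →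
      P₂ t ≤ Real.exp (-σ * t) *
        (P₂ 0 + ω * t * (P₀ 0 + P₁ 0) + ω ^ 2 * t ^ 2 / 2 * P₀ 0) := by
  -- derivative of e^{σ t}
  have hexp : ∀ t : ℝ, HasDerivAt (fun s => Real.exp (σ * s)) (σ * Real.exp (σ * t)) t := by
    intro t
    have := ((hasDerivAt_id t).const_mul σ).exp
    simpa [mul_comm] using this
  -- Step 0: e^{σt} P₀ t ≤ P₀ 0
  have hQ₀ : ∀ t, 0 ≤ t → Real.exp (σ * t) * P₀ t ≤ P₀ 0 := by
    have := aux_le_init (fun s => Real.exp (σ * s) * P₀ s)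
      (fun s => σ * Real.exp (σ * s) * P₀ s + Real.exp (σ * s) * d₀ s)
      (fun t ht => (hexp t).mul (hd₀ t ht))
      (fun t ht => by nlinarith [Real.exp_pos (σ * t), h₀ t ht, hP₀nn t ht])
    intro t ht
    simpa using this t ht
  -- Step 1: e^{σt} P₁ t ≤ P₁ 0 + ω t P₀ 0
  have hQ₁ : ∀ t, 0 ≤ t → Real.exp (σ * t) * P₁ t ≤ P₁ 0 + ω * t * P₀ 0 := by
    have := aux_le_init (fun s => Real.exp (σ * s) * P₁ s - ω * s * P₀ 0)
      (fun s => σ * Real.exp (σ * s) * P₁ s + Real.exp (σ * s) * d₁ s - ω * P₀ 0)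
      (fun t ht => by
        have h1 := (hexp t).mul (hd₁ t ht)
        have h2 : HasDerivAt (fun s : ℝ => ω * s * P₀ 0) (ω * P₀ 0) t := by
          simpa [mul_assoc, mul_comm] using
            ((hasDerivAt_id t).const_mul ω).mul_const (P₀ 0)
        exact h1.sub h2)
      (fun t ht => by
        have hq := hQ₀ t ht
        have := h₁ t ht
        nlinarith [Real.exp_pos (σ * t)])
    intro t ht
    have := this t ht
    simp at this
    linarith
  -- Step 2
  have hQ₂ : ∀ t, 0 ≤ t → Real.exp (σ * t) * P₂ t ≤
      P₂ 0 + ω * t * (P₀ 0 + P₁ 0) + ω ^ 2 * t ^ 2 / 2 * P₀ 0 := by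
    have := aux_le_init
      (fun s => Real.exp (σ * s) * P₂ s - ω * s * (P₀ 0 + P₁ 0) - ω ^ 2 * s ^ 2 / 2 * P₀ 0)
      (fun s => σ * Real.exp (σ * s) * P₂ s + Real.exp (σ * s) * d₂ s
        - ω * (P₀ 0 + P₁ 0) - ω ^ 2 * s * P₀ 0)
      (fun t ht => by
        have h1 := (hexp t).mul (hd₂ t ht)
        have h2 : HasDerivAt (fun s : ℝ => ω * s * (P₀ 0 + P₁ 0)) (ω * (P₀ 0 + P₁ 0)) t := by
          simpa [mul_assoc, mul_comm] using
            ((hasDerivAt_id t).const_mul ω).mul_const (P₀ 0 + P₁ 0)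
        have h3 : HasDerivAt (fun s : ℝ => ω ^ 2 * s ^ 2 / 2 * P₀ 0) (ω ^ 2 * t * P₀ 0) t := by
          have := (hasDerivAt_pow 2 t).const_mul (ω ^ 2)
          have h4 : HasDerivAt (fun s : ℝ => ω ^ 2 * s ^ 2 / 2 * P₀ 0)
              (ω ^ 2 * (2 * t ^ 1) / 2 * P₀ 0) t := by
            simpa [mul_div_assoc] using (this.div_const 2).mul_const (P₀ 0)
          convert h4 using 1
          ring
        exact (h1.sub h2).sub h3)
      (fun t ht => by
        have hq0 := hQ₀ t ht
        have hq1 := hQ₁ t ht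
        have := h₂ t ht
        nlinarith [Real.exp_pos (σ * t)])
    intro t ht
    have := this t ht
    simp at this
    linarith
  intro t ht
  have hq := hQ₂ t ht
  have he : Real.exp (-σ * t) = (Real.exp (σ * t))⁻¹ := by
    rw [← Real.exp_neg]; ring_nf
  rw [he, inv_mul_eq_div, le_div_iff₀ (Real.exp_pos _)]
  linarith [hq]
end

section
/- The boundary output of Φ applied to any nonnegative u satisfies ∫₀^{l_m} |Φ(u)(l)| dl ≤ ∫₀^{l_m} ∫₀^{a_m} |u(a,ĺ)| · 2β(a,ĺ) · ( ∫₀^{l_m} r(l,ĺ) dl ) da dĺ; consequently, if μ(a,l) + β(a,l) + F(0) ≥ 2β(a,l) ∫₀^{l_m} r(ĺ,l) dĺ + κ for some κ > 0 and all (a,l), then for any classical solution p ≥ 0 of the linear problem p_t + p_a = −(β+μ+F(0))p with p(0,l,t) = Φ(p(·,·,t))(l) and p(a_m,·,t) ≥ 0, the total population P(t) = ∫∫ p satisfies P'(t) ≤ −κ P(t), so P(t) ≤ e^{−κt} P(0). -/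
open MeasureTheory Set Filter Topology

lemma aux_meas (a_m l_m : ℝ) :
    (volume : Measure (ℝ × ℝ)).restrict (Ioo 0 a_m ×ˢ Ioo 0 l_m) =
      (volume.restrict (Ioc 0 a_m)).prod (volume.restrict (Ioc 0 l_m)) := by
  rw [Measure.prod_restrict, ← Measure.volume_eq_prod]
  refine (Measure.restrict_congr_set ?_)
  rw [MeasureTheory.ae_eq_set]
  have hsub : Ioo 0 a_m ×ˢ Ioo 0 l_m ⊆ Ioc 0 a_m ×ˢ Ioc 0 l_m :=
    prod_mono Ioo_subset_Ioc_self Ioo_subset_Ioc_self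
  constructor
  · simp [Set.diff_eq_empty.mpr hsub]
  · refine measure_mono_null (t := ({a_m} ×ˢ (univ : Set ℝ)) ∪ ((univ : Set ℝ) ×ˢ {l_m}))
      (fun q hq => ?_) ?_
    · have h1 : q.1 ∈ Ioc 0 a_m := hq.1.1
      have h2 : q.2 ∈ Ioc 0 l_m := hq.1.2
      have : q.1 = a_m ∨ q.2 = l_m := by
        by_contra h
        push_neg at h
        exact hq.2 ⟨⟨h1.1, lt_of_le_of_ne h1.2 h.1⟩, ⟨h2.1, lt_of_le_of_ne h2.2 h.2⟩⟩
      rcases this with h | h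
      · exact Or.inl ⟨h, trivial⟩
      · exact Or.inr ⟨trivial, h⟩
    · refine measure_union_null ?_ ?_ <;>
        · rw [Measure.volume_eq_prod, Measure.prod_prod]
          simp

lemma aux_iter (a_m l_m : ℝ) (ham : 0 ≤ a_m) (hlm : 0 ≤ l_m) (w : ℝ × ℝ → ℝ)
    (hw : Integrable w ((volume.restrict (Ioc 0 a_m)).prod (volume.restrict (Ioc 0 l_m)))) :
    ∫ l in (0:ℝ)..l_m, ∫ a in (0:ℝ)..a_m, w (a, l) =
      ∫ q, w q ∂((volume.restrict (Ioc 0 a_m)).prod (volume.restrict (Ioc 0 l_m))) := by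
  have hw' : Integrable (Function.uncurry fun a l => w (a, l))
      ((volume.restrict (Ioc 0 a_m)).prod (volume.restrict (Ioc 0 l_m))) := hw
  rw [intervalIntegral.integral_of_le hlm]
  simp_rw [intervalIntegral.integral_of_le ham]
  rw [← MeasureTheory.integral_integral_swap hw', MeasureTheory.integral_integral hw']
lemma aux_phi (a_m l_m : ℝ) (ham : 0 < a_m) (hlm : 0 < l_m)
    (β r : ℝ → ℝ → ℝ)
    (hβ : Continuous fun q : ℝ × ℝ => β q.1 q.2) (hβ0 : ∀ a l, 0 ≤ β a l)
    (hr : Continuous fun q : ℝ × ℝ => r q.1 q.2) (hr0 : ∀ l l', 0 ≤ r l l')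
    (u : ℝ × ℝ → ℝ)
    (hu : Integrable u (volume.restrict (Ioo 0 a_m ×ˢ Ioo 0 l_m)))
    (hu0 : ∀ q, 0 ≤ u q) :
    ∫ l in (0:ℝ)..l_m, |2 * ∫ l' in (0:ℝ)..l_m, r l l' * ∫ a in (0:ℝ)..a_m, β a l' * u (a, l')| =
      ∫ q in Ioo 0 a_m ×ˢ Ioo 0 l_m, |u q| * (2 * β q.1 q.2 * ∫ l in (0:ℝ)..l_m, r l q.2) := by
  have hfinA : IsFiniteMeasure (volume.restrict (Ioc (0:ℝ) a_m)) :=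
    ⟨by rw [Measure.restrict_apply_univ]; simp [Real.volume_Ioc]⟩
  have hfinL : IsFiniteMeasure (volume.restrict (Ioc (0:ℝ) l_m)) :=
    ⟨by rw [Measure.restrict_apply_univ]; simp [Real.volume_Ioc]⟩
  set μA := volume.restrict (Ioc (0:ℝ) a_m) with hμAdef
  set μL := volume.restrict (Ioc (0:ℝ) l_m) with hμLdef
  have hu' : Integrable u (μA.prod μL) := by rw [← aux_meas]; exact hu
  -- bounds
  obtain ⟨Cβ, hCβ⟩ :=
    (isCompact_Icc.prod isCompact_Icc :
      IsCompact (Icc (0:ℝ) a_m ×ˢ Icc (0:ℝ) l_m)).exists_bound_of_continuousOn hβ.continuousOn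
  obtain ⟨Cr, hCr⟩ :=
    (isCompact_Icc.prod isCompact_Icc :
      IsCompact (Icc (0:ℝ) l_m ×ˢ Icc (0:ℝ) l_m)).exists_bound_of_continuousOn hr.continuousOn
  have hmemA : ∀ᵐ q ∂(μA.prod μL), q ∈ Ioc (0:ℝ) a_m ×ˢ Ioc (0:ℝ) l_m := by
    rw [hμAdef, hμLdef, Measure.prod_restrict]
    exact ae_restrict_mem (measurableSet_Ioc.prod measurableSet_Ioc)
  have hmemL : ∀ᵐ q ∂(μL.prod μL), q ∈ Ioc (0:ℝ) l_m ×ˢ Ioc (0:ℝ) l_m := by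
    rw [hμLdef, Measure.prod_restrict]
    exact ae_restrict_mem (measurableSet_Ioc.prod measurableSet_Ioc)
  -- v = β * u integrable on product
  have hv : Integrable (fun q : ℝ × ℝ => β q.1 q.2 * u q) (μA.prod μL) :=
    hu'.bdd_mul hβ.aestronglyMeasurable
      (hmemA.mono fun q hq =>
        hCβ q ⟨Ioc_subset_Icc_self hq.1, Ioc_subset_Icc_self hq.2⟩)
  -- inner integral I
  set I : ℝ → ℝ := fun l' => ∫ a, β a l' * u (a, l') ∂μA with hIdef
  have hI : Integrable I μL := hv.integral_prod_right
  have hI0 : ∀ l', 0 ≤ I l' := fun l' =>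
    integral_nonneg fun a => mul_nonneg (hβ0 a l') (hu0 (a, l'))
  -- g integrable on μL.prod μL
  have h1 : Integrable (fun z : ℝ × ℝ => I z.2) (μL.prod μL) := by
    have := (integrable_const (1:ℝ) (μ := μL)).mul_prod hI
    simpa using this
  have hg : Integrable (fun z : ℝ × ℝ => r z.1 z.2 * I z.2) (μL.prod μL) :=
    h1.bdd_mul hr.aestronglyMeasurable
      (hmemL.mono fun q hq =>
        hCr q ⟨Ioc_subset_Icc_self hq.1, Ioc_subset_Icc_self hq.2⟩)
  -- R
  set R : ℝ → ℝ := fun l' => ∫ l, r l l' ∂μL with hRdef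
  have hRc : Continuous R := by
    have : Continuous fun l' => ∫ l in (0:ℝ)..l_m, r l l' := by
      apply intervalIntegral.continuous_parametric_intervalIntegral_of_continuous'
        (f := fun l' l => r l l')
      exact hr.comp (continuous_swap)
    have heq : R = fun l' => ∫ l in (0:ℝ)..l_m, r l l' := by
      funext l'; rw [intervalIntegral.integral_of_le hlm.le]
    rw [heq]; exact this
  -- LHS
  have habs : ∀ l, |2 * ∫ l' in (0:ℝ)..l_m, r l l' * ∫ a in (0:ℝ)..a_m, β a l' * u (a, l')| =
      2 * ∫ l', r l l' * I l' ∂μL := by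
    intro l
    have e1 : (∫ l' in (0:ℝ)..l_m, r l l' * ∫ a in (0:ℝ)..a_m, β a l' * u (a, l')) =
        ∫ l', r l l' * I l' ∂μL := by
      rw [intervalIntegral.integral_of_le hlm.le]
      exact setIntegral_congr_fun measurableSet_Ioc fun l' _ => by
        rw [intervalIntegral.integral_of_le ham.le]
    rw [e1]
    exact abs_of_nonneg (mul_nonneg (by norm_num)
      (integral_nonneg fun l' => mul_nonneg (hr0 l l') (hI0 l')))
  calc ∫ l in (0:ℝ)..l_m, |2 * ∫ l' in (0:ℝ)..l_m, r l l' * ∫ a in (0:ℝ)..a_m, β a l' * u (a, l')|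
      = ∫ l, 2 * ∫ l', r l l' * I l' ∂μL ∂μL := by
        rw [intervalIntegral.integral_of_le hlm.le]
        exact setIntegral_congr_fun measurableSet_Ioc fun l _ => habs l
    _ = 2 * ∫ l, ∫ l', r l l' * I l' ∂μL ∂μL := integral_const_mul 2 _
    _ = 2 * ∫ l', ∫ l, r l l' * I l' ∂μL ∂μL :=
        congrArg (2 * ·) (integral_integral_swap hg)
    _ = 2 * ∫ l', R l' * I l' ∂μL := by
        congr 1
        exact integral_congr_ae (.of_forall fun l' => integral_mul_const _ _)
    _ = ∫ l', I l' * (2 * R l') ∂μL := by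
        rw [← integral_const_mul]
        exact integral_congr_ae (.of_forall fun l' => by ring)
    _ = ∫ q : ℝ × ℝ, (β q.1 q.2 * u (q.1, q.2)) * (2 * R q.2) ∂(μA.prod μL) := by
        have hw : Integrable (fun q : ℝ × ℝ => (β q.1 q.2 * u q) * (2 * R q.2)) (μA.prod μL) := by
          obtain ⟨CR, hCR⟩ := isCompact_Icc.exists_bound_of_continuousOn
            (hRc.continuousOn (s := Icc (0:ℝ) l_m))
          have h2 : Integrable (fun q : ℝ × ℝ => (2 * R q.2) * (β q.1 q.2 * u q)) (μA.prod μL) :=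
            hv.bdd_mul ((continuous_const.mul (hRc.comp continuous_snd)).aestronglyMeasurable)
              (hmemA.mono fun q hq => by
                have hb := hCR q.2 (Ioc_subset_Icc_self hq.2)
                calc ‖2 * R q.2‖ ≤ 2 * ‖R q.2‖ := by
                      rw [norm_mul]; simp
                  _ ≤ 2 * CR := by nlinarith [norm_nonneg (R q.2)]
              )
          exact h2.congr (.of_forall fun q => by ring)
        have hw2 : Integrable
            (Function.uncurry fun a l' => (β a l' * u (a, l')) * (2 * R l')) (μA.prod μL) := hw
        rw [← integral_integral hw2, integral_integral_swap hw2]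
        exact integral_congr_ae (.of_forall fun l' => (integral_mul_const _ _).symm)
    _ = ∫ q, (β q.1 q.2 * u q) * (2 * R q.2) ∂(μA.prod μL) := rfl
    _ = ∫ q in Ioo 0 a_m ×ˢ Ioo 0 l_m,
          |u q| * (2 * β q.1 q.2 * ∫ l in (0:ℝ)..l_m, r l q.2) := by
        rw [aux_meas]
        refine integral_congr_ae (.of_forall fun q => ?_)
        show (β q.1 q.2 * u q) * (2 * R q.2) =
          |u q| * (2 * β q.1 q.2 * ∫ l in (0:ℝ)..l_m, r l q.2)
        rw [abs_of_nonneg (hu0 q), hRdef, intervalIntegral.integral_of_le hlm.le]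
        ring

/-- L¹ bound for the boundary operator Φ, and exponential decay of the total
population under the dissipativity condition μ+β+F(0) ≥ 2β∫r(l',l)dl' + κ. -/
theorem stmt_19 (a_m l_m F0 κ : ℝ) (ham : 0 < a_m) (hlm : 0 < l_m)
    (hF0 : 0 ≤ F0) (hκ : 0 < κ)
    (β μ : ℝ → ℝ → ℝ) (r : ℝ → ℝ → ℝ)
    (hβ : Continuous fun q : ℝ × ℝ => β q.1 q.2) (hβ0 : ∀ a l, 0 ≤ β a l)
    (hμ : Continuous fun q : ℝ × ℝ => μ q.1 q.2) (hμ0 : ∀ a l, 0 ≤ μ a l)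
    (hr : Continuous fun q : ℝ × ℝ => r q.1 q.2) (hr0 : ∀ l l', 0 ≤ r l l')
    (Φ : (ℝ × ℝ → ℝ) → ℝ → ℝ)
    (hΦ : ∀ u l, Φ u l =
      2 * ∫ l' in (0:ℝ)..l_m, r l l' * ∫ a in (0:ℝ)..a_m, β a l' * u (a, l'))
    (hdiss : ∀ a ∈ Icc 0 a_m, ∀ l ∈ Icc 0 l_m,
      2 * β a l * (∫ l' in (0:ℝ)..l_m, r l' l) + κ ≤ μ a l + β a l + F0)
    (p pt pa : ℝ → ℝ → ℝ → ℝ)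
    (hp0 : ∀ a l t, 0 ≤ p a l t)
    (hpt : ∀ a l t, HasDerivAt (fun s => p a l s) (pt a l t) t)
    (hpa : ∀ a l t, HasDerivAt (fun b => p b l t) (pa a l t) a)
    (hPDE : ∀ a l t, pt a l t + pa a l t = -(β a l + μ a l + F0) * p a l t)
    (hbc : ∀ l t, p 0 l t = Φ (fun q => p q.1 q.2 t) l)
    (hcont : ∀ t, Continuous fun q : ℝ × ℝ => p q.1 q.2 t)
    (hcont' : ∀ t, Continuous fun q : ℝ × ℝ => pt q.1 q.2 t)
    (P : ℝ → ℝ)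
    (hP : ∀ t, P t = ∫ l in (0:ℝ)..l_m, ∫ a in (0:ℝ)..a_m, p a l t)
    (hP' : ∀ t, HasDerivAt P (∫ l in (0:ℝ)..l_m, ∫ a in (0:ℝ)..a_m, pt a l t) t) :
    -- L¹ bound on the boundary output of Φ
    (∀ u : ℝ × ℝ → ℝ,
      Integrable u (volume.restrict (Ioo 0 a_m ×ˢ Ioo 0 l_m)) →
      (∀ q, 0 ≤ u q) →
      ∫ l in (0:ℝ)..l_m, |Φ u l| ≤
        ∫ q in Ioo 0 a_m ×ˢ Ioo 0 l_m,
          |u q| * (2 * β q.1 q.2 * ∫ l in (0:ℝ)..l_m, r l q.2)) ∧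
    -- exponential decay of the total population
    (∀ t, 0 ≤ t →
      (∫ l in (0:ℝ)..l_m, ∫ a in (0:ℝ)..a_m, pt a l t) ≤ -κ * P t) ∧
    (∀ t, 0 ≤ t → P t ≤ Real.exp (-κ * t) * P 0) := by
  have key : ∀ u : ℝ × ℝ → ℝ,
      Integrable u (volume.restrict (Ioo 0 a_m ×ˢ Ioo 0 l_m)) →
      (∀ q, 0 ≤ u q) →
      ∫ l in (0:ℝ)..l_m, |Φ u l| =
        ∫ q in Ioo 0 a_m ×ˢ Ioo 0 l_m,
          |u q| * (2 * β q.1 q.2 * ∫ l in (0:ℝ)..l_m, r l q.2) := by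
    intro u hu hu0
    simp_rw [hΦ]
    exact aux_phi a_m l_m ham hlm β r hβ hβ0 hr hr0 u hu hu0
  have hΦ0 : ∀ u : ℝ × ℝ → ℝ, (∀ q, 0 ≤ u q) → ∀ l, 0 ≤ Φ u l := by
    intro u hu0 l
    rw [hΦ]
    refine mul_nonneg (by norm_num) (intervalIntegral.integral_nonneg hlm.le fun l' _ => ?_)
    exact mul_nonneg (hr0 _ _) (intervalIntegral.integral_nonneg ham.le fun a _ =>
      mul_nonneg (hβ0 _ _) (hu0 _))
  have decay : ∀ t, (∫ l in (0:ℝ)..l_m, ∫ a in (0:ℝ)..a_m, pt a l t) ≤ -κ * P t := by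
    intro t
    set u : ℝ × ℝ → ℝ := fun q => p q.1 q.2 t with hudef
    have hu0' : ∀ q, 0 ≤ u q := fun q => hp0 q.1 q.2 t
    have hKsub : Ioo 0 a_m ×ˢ Ioo 0 l_m ⊆ Icc 0 a_m ×ˢ Icc 0 l_m :=
      prod_mono Ioo_subset_Icc_self Ioo_subset_Icc_self
    have hKc : IsCompact (Icc (0:ℝ) a_m ×ˢ Icc (0:ℝ) l_m) := isCompact_Icc.prod isCompact_Icc
    have hu_int : Integrable u (volume.restrict (Ioo 0 a_m ×ˢ Ioo 0 l_m)) :=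
      (((hcont t).continuousOn).integrableOn_compact hKc).mono_set hKsub
    have hRcont : Continuous fun l' => ∫ l in (0:ℝ)..l_m, r l l' := by
      apply intervalIntegral.continuous_parametric_intervalIntegral_of_continuous'
        (f := fun l' l => r l l')
      exact hr.comp continuous_swap
    have stepA : ∀ l, ∫ a in (0:ℝ)..a_m, pt a l t =
        p 0 l t - p a_m l t - ∫ a in (0:ℝ)..a_m, (β a l + μ a l + F0) * p a l t := by
      intro l
      have cpair : Continuous fun a : ℝ => ((a, l) : ℝ × ℝ) :=
        continuous_id.prodMk continuous_const
      have hcβμp : Continuous fun a => (β a l + μ a l + F0) * p a l t :=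
        (((hβ.comp cpair).add (hμ.comp cpair)).add continuous_const).mul ((hcont t).comp cpair)
      have hcpt : Continuous fun a => pt a l t := (hcont' t).comp cpair
      have hcpa : Continuous fun a => pa a l t := by
        have e : (fun a => pa a l t) =
            fun a => -pt a l t - (β a l + μ a l + F0) * p a l t := by
          funext a; have := hPDE a l t; linarith
        rw [e]
        exact hcpt.neg.sub hcβμp
      have hFTC : ∫ a in (0:ℝ)..a_m, pa a l t = p a_m l t - p 0 l t :=
        intervalIntegral.integral_eq_sub_of_hasDerivAt (fun a _ => hpa a l t)
          (hcpa.intervalIntegrable 0 a_m)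
      have hsplit : ∀ a : ℝ, pt a l t = -pa a l t + -((β a l + μ a l + F0) * p a l t) := by
        intro a; have := hPDE a l t; linarith
      rw [intervalIntegral.integral_congr (g := fun a =>
          -pa a l t + -((β a l + μ a l + F0) * p a l t)) (fun a _ => hsplit a),
        intervalIntegral.integral_add (f := fun a => -pa a l t)
          (g := fun a => -((β a l + μ a l + F0) * p a l t)) (hcpa.neg.intervalIntegrable 0 a_m)
        (hcβμp.neg.intervalIntegrable 0 a_m), intervalIntegral.integral_neg,
        intervalIntegral.integral_neg, hFTC]
      ring
    have cpair2 : ∀ a : ℝ, Continuous fun l : ℝ => ((a, l) : ℝ × ℝ) := fun a =>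
      continuous_const.prodMk continuous_id
    have hc0 : Continuous fun l => p 0 l t := (hcont t).comp (cpair2 0)
    have hcam : Continuous fun l => p a_m l t := (hcont t).comp (cpair2 a_m)
    have hGcont : Continuous fun l => ∫ a in (0:ℝ)..a_m, (β a l + μ a l + F0) * p a l t := by
      apply intervalIntegral.continuous_parametric_intervalIntegral_of_continuous'
        (f := fun l a => (β a l + μ a l + F0) * p a l t)
      have csw : Continuous fun z : ℝ × ℝ => ((z.2, z.1) : ℝ × ℝ) := continuous_swap
      exact (((hβ.comp csw).add (hμ.comp csw)).add continuous_const).mul ((hcont t).comp csw)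
    have hD : (∫ l in (0:ℝ)..l_m, ∫ a in (0:ℝ)..a_m, pt a l t) =
        (∫ l in (0:ℝ)..l_m, p 0 l t) - (∫ l in (0:ℝ)..l_m, p a_m l t) -
          ∫ l in (0:ℝ)..l_m, ∫ a in (0:ℝ)..a_m, (β a l + μ a l + F0) * p a l t := by
      rw [intervalIntegral.integral_congr (g := fun l =>
        p 0 l t - p a_m l t - ∫ a in (0:ℝ)..a_m, (β a l + μ a l + F0) * p a l t)
        (fun l _ => stepA l)]
      rw [intervalIntegral.integral_sub (f := fun l => p 0 l t - p a_m l t)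
        (g := fun l => ∫ a in (0:ℝ)..a_m, (β a l + μ a l + F0) * p a l t) ((hc0.sub hcam).intervalIntegrable 0 l_m)
        (hGcont.intervalIntegrable 0 l_m),
        intervalIntegral.integral_sub (hc0.intervalIntegrable 0 l_m)
        (hcam.intervalIntegrable 0 l_m)]
    have hA : 0 ≤ ∫ l in (0:ℝ)..l_m, p a_m l t :=
      intervalIntegral.integral_nonneg hlm.le fun l _ => hp0 a_m l t
    have hwcont : Continuous fun q : ℝ × ℝ =>
        |u q| * (2 * β q.1 q.2 * ∫ l in (0:ℝ)..l_m, r l q.2) :=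
      ((hcont t).abs).mul ((continuous_const.mul hβ).mul (hRcont.comp continuous_snd))
    have hw2cont : Continuous fun q : ℝ × ℝ => u q * (μ q.1 q.2 + β q.1 q.2 + F0 - κ) :=
      (hcont t).mul (((hμ.add hβ).add continuous_const).sub continuous_const)
    have hB : (∫ l in (0:ℝ)..l_m, p 0 l t) ≤
        ∫ q in Ioo 0 a_m ×ˢ Ioo 0 l_m, u q * (μ q.1 q.2 + β q.1 q.2 + F0 - κ) := by
      have e1 : (∫ l in (0:ℝ)..l_m, p 0 l t) = ∫ l in (0:ℝ)..l_m, |Φ u l| := by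
        refine intervalIntegral.integral_congr fun l _ => ?_
        rw [hbc l t, abs_of_nonneg (hΦ0 u hu0' l)]
      rw [e1, key u hu_int hu0']
      refine setIntegral_mono_on
        (((hwcont.continuousOn).integrableOn_compact hKc).mono_set hKsub)
        (((hw2cont.continuousOn).integrableOn_compact hKc).mono_set hKsub)
        (measurableSet_Ioo.prod measurableSet_Ioo) (fun q hq => ?_)
      rw [abs_of_nonneg (hu0' q)]
      have hq1 : q.1 ∈ Icc (0:ℝ) a_m := Ioo_subset_Icc_self hq.1
      have hq2 : q.2 ∈ Icc (0:ℝ) l_m := Ioo_subset_Icc_self hq.2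
      have hd := hdiss q.1 hq1 q.2 hq2
      have h2 : 2 * β q.1 q.2 * (∫ l in (0:ℝ)..l_m, r l q.2) ≤
          μ q.1 q.2 + β q.1 q.2 + F0 - κ := by linarith
      exact mul_le_mul_of_nonneg_left h2 (hu0' q)
    have hCw : Integrable (fun q : ℝ × ℝ => (β q.1 q.2 + μ q.1 q.2 + F0) * u q)
        ((volume.restrict (Ioc 0 a_m)).prod (volume.restrict (Ioc 0 l_m))) := by
      rw [← aux_meas]
      exact ((((hβ.add hμ).add continuous_const).mul (hcont t)).continuousOn.integrableOn_compact
        hKc).mono_set hKsub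
    have hC : (∫ l in (0:ℝ)..l_m, ∫ a in (0:ℝ)..a_m, (β a l + μ a l + F0) * p a l t) =
        ∫ q in Ioo 0 a_m ×ˢ Ioo 0 l_m, (β q.1 q.2 + μ q.1 q.2 + F0) * u q := by
      rw [aux_meas]
      exact aux_iter a_m l_m ham.le hlm.le _ hCw
    have hPu : Integrable u
        ((volume.restrict (Ioc 0 a_m)).prod (volume.restrict (Ioc 0 l_m))) := by
      rw [← aux_meas]; exact hu_int
    have hPt : P t = ∫ q in Ioo 0 a_m ×ˢ Ioo 0 l_m, u q := by
      rw [hP t, aux_meas]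
      exact aux_iter a_m l_m ham.le hlm.le u hPu
    have hint1 : Integrable (fun q : ℝ × ℝ => u q * (μ q.1 q.2 + β q.1 q.2 + F0 - κ))
        (volume.restrict (Ioo 0 a_m ×ˢ Ioo 0 l_m)) :=
      ((hw2cont.continuousOn).integrableOn_compact hKc).mono_set hKsub
    have hint2 : Integrable (fun q : ℝ × ℝ => (β q.1 q.2 + μ q.1 q.2 + F0) * u q)
        (volume.restrict (Ioo 0 a_m ×ˢ Ioo 0 l_m)) := by
      rw [aux_meas]; exact hCw
    have hfinal : (∫ q in Ioo 0 a_m ×ˢ Ioo 0 l_m, u q * (μ q.1 q.2 + β q.1 q.2 + F0 - κ)) -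
        (∫ q in Ioo 0 a_m ×ˢ Ioo 0 l_m, (β q.1 q.2 + μ q.1 q.2 + F0) * u q) =
        -κ * P t := by
      rw [hPt, ← integral_sub hint1 hint2, ← integral_const_mul]
      exact integral_congr_ae (.of_forall fun q => by ring)
    rw [hD, hC]
    linarith [hB, hA, hfinal]
  refine ⟨fun u hu hu0 => le_of_eq (key u hu hu0), fun t _ => decay t, ?_⟩
  intro t ht
  have hPcont : Continuous P := continuous_iff_continuousAt.mpr fun τ => (hP' τ).continuousAt
  have hg' : ∀ s : ℝ, HasDerivAt (fun τ => Real.exp (κ * τ) * P τ)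
      (Real.exp (κ * s) * (κ * P s +
        (∫ l in (0:ℝ)..l_m, ∫ a in (0:ℝ)..a_m, pt a l s))) s := by
    intro s
    have h1 : HasDerivAt (fun τ : ℝ => κ * τ) κ s := by
      simpa using (hasDerivAt_id s).const_mul κ
    have he : HasDerivAt (fun τ => Real.exp (κ * τ)) (Real.exp (κ * s) * κ) s :=
      (Real.hasDerivAt_exp (κ * s)).comp s h1
    have : HasDerivAt (fun τ => Real.exp (κ * τ) * P τ) _ s := he.mul (hP' s)
    convert this using 1
    ring
  have hanti : AntitoneOn (fun τ => Real.exp (κ * τ) * P τ) (Ici 0) := by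
    apply antitoneOn_of_deriv_nonpos (convex_Ici 0)
    · exact ((Real.continuous_exp.comp (continuous_const.mul continuous_id)).mul
        hPcont).continuousOn
    · intro x _
      exact ((hg' x).differentiableAt).differentiableWithinAt
    · intro x _
      rw [(hg' x).deriv]
      have hsum : κ * P x + (∫ l in (0:ℝ)..l_m, ∫ a in (0:ℝ)..a_m, pt a l x) ≤ 0 := by
        have := decay x; linarith
      exact mul_nonpos_of_nonneg_of_nonpos (Real.exp_pos _).le hsum
  have h0 : Real.exp (κ * t) * P t ≤ Real.exp (κ * 0) * P 0 :=
    hanti (self_mem_Ici) ht ht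
  rw [mul_zero, Real.exp_zero, one_mul] at h0
  have h1 : P t = Real.exp (-(κ * t)) * (Real.exp (κ * t) * P t) := by
    rw [← mul_assoc, ← Real.exp_add]; simp
  rw [show -κ * t = -(κ * t) by ring, h1]
  exact mul_le_mul_of_nonneg_left h0 (Real.exp_pos _).le
end
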